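/- The constant 4 in the three-dimensional Hardy inequality is optimal: for every ε > 0 there exists a compactly supported function f_ε ∈ W^{1,2}(ℝ³), not identically zero, such that ∫_{ℝ³} f_ε(x)²/|x|² dx > (4 − ε) ∫_{ℝ³} |∇f_ε(x)|² dx. -/

import Mathlib

open MeasureTheory Real Set Filter intervalIntegral

noncomputable section

namespace HardyAux

lemma hasDerivAt_maxsq (s : ℝ) :
    HasDerivAt (fun u : ℝ => max u 0 ^ 2) (2 * max s 0) s := by
  rcases lt_trichotomy s 0 with h | h | h
  · have he : (fun u : ℝ => max u 0 ^ 2) =ᶠ[nhds s] fun _ => (0 : ℝ) := by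
      filter_upwards [Iio_mem_nhds h] with u hu
      simp [max_eq_right (le_of_lt (mem_Iio.mp hu))]
    have h0 := (hasDerivAt_const s (0 : ℝ)).congr_of_eventuallyEq he
    simpa [max_eq_right h.le] using h0
  · subst h
    rw [hasDerivAt_iff_tendsto_slope]
    have hb : ∀ u : ℝ, ‖slope (fun u : ℝ => max u 0 ^ 2) 0 u‖ ≤ |u| := by
      intro u
      have hs : slope (fun u : ℝ => max u 0 ^ 2) 0 u = max u 0 ^ 2 / u := by
        simp [slope_def_field]
      rw [hs]
      rcases le_or_gt u 0 with hu | hu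
      · simp [max_eq_right hu]
      · rw [max_eq_left hu.le, sq, mul_div_assoc, div_self hu.ne']
        simp [abs_of_pos hu]
    have : Tendsto (fun u : ℝ => |u|) (nhdsWithin 0 {(0:ℝ)}ᶜ) (nhds 0) := by
      have h1 := (continuous_abs.tendsto (0:ℝ)).mono_left (nhdsWithin_le_nhds (s := {(0:ℝ)}ᶜ))
      simpa using h1
    simpa [max_self] using squeeze_zero_norm hb this
  · have he : (fun u : ℝ => max u 0 ^ 2) =ᶠ[nhds s] fun u => u ^ 2 := by
      filter_upwards [Ioi_mem_nhds h] with u hu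
      simp [max_eq_left (le_of_lt (mem_Ioi.mp hu))]
    have h0 := ((hasDerivAt_pow 2 s).congr_of_eventuallyEq he)
    rw [max_eq_left h.le]
    simpa [mul_comm] using h0

def H (t : ℝ) : ℝ := max (1 - t ^ 2) 0 ^ 2

def Hd (t : ℝ) : ℝ := 2 * max (1 - t ^ 2) 0 * (-(2 * t))

lemma hasDerivAt_H (t : ℝ) : HasDerivAt H (Hd t) t := by
  have h1 : HasDerivAt (fun t : ℝ => 1 - t ^ 2) (-(2 * t)) t := by
    simpa using (hasDerivAt_pow 2 t).const_sub 1
  have h2 := (hasDerivAt_maxsq (1 - t ^ 2)).comp t h1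
  exact h2

lemma continuous_H : Continuous H := by
  unfold H; fun_prop

lemma continuous_Hd : Continuous Hd := by
  unfold Hd; fun_prop

lemma H_eq {t : ℝ} (h : |t| ≤ 1) : H t = (1 - t ^ 2) ^ 2 := by
  have : 0 ≤ 1 - t ^ 2 := by nlinarith [abs_nonneg t, sq_abs t]
  simp [H, max_eq_left this]

lemma Hd_eq {t : ℝ} (h : |t| ≤ 1) : Hd t = 2 * (1 - t ^ 2) * (-(2 * t)) := by
  have : 0 ≤ 1 - t ^ 2 := by nlinarith [abs_nonneg t, sq_abs t]
  simp [Hd, max_eq_left this]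

lemma H_zero {t : ℝ} (h : 1 ≤ |t|) : H t = 0 := by
  have : 1 - t ^ 2 ≤ 0 := by nlinarith [abs_nonneg t, sq_abs t]
  simp [H, max_eq_right this]

lemma Hd_zero {t : ℝ} (h : 1 ≤ |t|) : Hd t = 0 := by
  have : 1 - t ^ 2 ≤ 0 := by nlinarith [abs_nonneg t, sq_abs t]
  simp [Hd, max_eq_right this]

end HardyAux

namespace HardyAux

def phi (b r : ℝ) : ℝ := r ^ (-(1/2) : ℝ) * H (b * Real.log r)

def phid (b r : ℝ) : ℝ :=
  (-(1/2) : ℝ) * r ^ (-(3/2) : ℝ) * H (b * Real.log r)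
    + r ^ (-(1/2) : ℝ) * (Hd (b * Real.log r) * (b * r⁻¹))

lemma hasDerivAt_phi (b : ℝ) {r : ℝ} (hr : 0 < r) :
    HasDerivAt (phi b) (phid b r) r := by
  have h1 : HasDerivAt (fun r : ℝ => r ^ (-(1/2) : ℝ))
      ((-(1/2) : ℝ) * r ^ (-(3/2) : ℝ)) r := by
    have h := Real.hasDerivAt_rpow_const (x := r) (p := (-(1/2) : ℝ)) (Or.inl hr.ne')
    have he : (-(1/2) : ℝ) - 1 = -(3/2) := by norm_num
    rwa [he] at h
  have h2 : HasDerivAt (fun r : ℝ => b * Real.log r) (b * r⁻¹) r :=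
    (Real.hasDerivAt_log hr.ne').const_mul b
  have h3 : HasDerivAt (fun r : ℝ => H (b * Real.log r))
      (Hd (b * Real.log r) * (b * r⁻¹)) r := by
    have := (hasDerivAt_H (b * Real.log r)).comp r h2; exact this
  exact h1.mul h3

lemma log_lt_neg {b r : ℝ} (hb : 0 < b) (hr : 0 < r) (h : r < Real.exp (-b⁻¹)) :
    b * Real.log r ≤ -1 := by
  have h1 : Real.log r < -b⁻¹ := (Real.log_lt_iff_lt_exp hr).mpr h
  have h2 : b * Real.log r < b * (-b⁻¹) := by
    exact mul_lt_mul_of_pos_left h1 hb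
  have h3 : b * (-b⁻¹) = -1 := by field_simp
  linarith

lemma log_gt_pos {b r : ℝ} (hb : 0 < b) (h : Real.exp b⁻¹ < r) :
    1 ≤ b * Real.log r := by
  have hr : 0 < r := lt_trans (Real.exp_pos _) h
  have h1 : b⁻¹ < Real.log r := (Real.lt_log_iff_exp_lt hr).mpr h
  have h2 : b * b⁻¹ < b * Real.log r := mul_lt_mul_of_pos_left h1 hb
  have h3 : b * b⁻¹ = 1 := by field_simp
  linarith

lemma phi_zero_small {b r : ℝ} (hb : 0 < b) (h0 : 0 ≤ r) (h : r < Real.exp (-b⁻¹)) :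
    phi b r = 0 := by
  rcases h0.eq_or_lt with h0' | h0'
  · simp [phi, ← h0', Real.zero_rpow (by norm_num : (-(1/2) : ℝ) ≠ 0)]
  · have ht : 1 ≤ |b * Real.log r| := le_abs.mpr (Or.inr (by linarith [log_lt_neg hb h0' h]))
    simp [phi, H_zero ht]

lemma phi_zero_large {b r : ℝ} (hb : 0 < b) (h : Real.exp b⁻¹ < r) :
    phi b r = 0 := by
  have ht : 1 ≤ |b * Real.log r| := le_abs.mpr (Or.inl (log_gt_pos hb h))
  simp [phi, H_zero ht]

lemma phid_zero_small {b r : ℝ} (hb : 0 < b) (h0 : 0 ≤ r) (h : r < Real.exp (-b⁻¹)) :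
    phid b r = 0 := by
  rcases h0.eq_or_lt with h0' | h0'
  · simp [phid, ← h0', Real.zero_rpow (by norm_num : (-(1/2) : ℝ) ≠ 0),
      Real.zero_rpow (by norm_num : (-(3/2) : ℝ) ≠ 0)]
  · have ht : 1 ≤ |b * Real.log r| := le_abs.mpr (Or.inr (by linarith [log_lt_neg hb h0' h]))
    simp [phid, H_zero ht, Hd_zero ht]

lemma phid_zero_large {b r : ℝ} (hb : 0 < b) (h : Real.exp b⁻¹ < r) :
    phid b r = 0 := by
  have ht : 1 ≤ |b * Real.log r| := le_abs.mpr (Or.inl (log_gt_pos hb h))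
  simp [phid, H_zero ht, Hd_zero ht]

lemma phi_one (b : ℝ) : phi b 1 = 1 := by
  simp [phi, H, Real.one_rpow, Real.log_one]

lemma continuousAt_phid {b r : ℝ} (hr : 0 < r) : ContinuousAt (phid b) r := by
  have h1 : ContinuousAt (fun r : ℝ => r ^ (-(3/2) : ℝ)) r :=
    Real.continuousAt_rpow_const r _ (Or.inl hr.ne')
  have h2 : ContinuousAt (fun r : ℝ => r ^ (-(1/2) : ℝ)) r :=
    Real.continuousAt_rpow_const r _ (Or.inl hr.ne')
  have h3 : ContinuousAt (fun r : ℝ => b * Real.log r) r :=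
    (Real.continuousAt_log hr.ne').const_mul b
  have h4 : ContinuousAt (fun r : ℝ => r⁻¹) r := continuousAt_inv₀ hr.ne'
  exact (((continuousAt_const.mul h1).mul (continuous_H.continuousAt.comp h3)).add
    (h2.mul ((continuous_Hd.continuousAt.comp h3).mul (continuousAt_const.mul h4))))

end HardyAux

namespace HardyAux

abbrev E3 := EuclideanSpace ℝ (Fin 3)

def fb (b : ℝ) (x : E3) : ℝ := phi b ‖x‖

lemma hasFDerivAt_norm3 {x : E3} (hx : x ≠ 0) :
    HasFDerivAt (fun y : E3 => ‖y‖) (‖x‖⁻¹ • innerSL ℝ x) x := by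
  have h0 : (0 : ℝ) < ‖x‖ := norm_pos_iff.mpr hx
  have h1 : HasFDerivAt (fun y : E3 => ‖y‖ ^ 2) ((2 : ℕ) • innerSL ℝ x) x :=
    (hasStrictFDerivAt_norm_sq x).hasFDerivAt
  have h2 : HasDerivAt Real.sqrt (1 / (2 * Real.sqrt (‖x‖ ^ 2))) (‖x‖ ^ 2) :=
    Real.hasDerivAt_sqrt (by positivity)
  have h3 := h2.comp_hasFDerivAt x h1
  have hfun : (fun y : E3 => Real.sqrt (‖y‖ ^ 2)) = fun y : E3 => ‖y‖ :=
    funext fun y => Real.sqrt_sq (norm_nonneg y)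
  rw [show (Real.sqrt ∘ fun y : E3 => ‖y‖ ^ 2) = fun y : E3 => Real.sqrt (‖y‖ ^ 2) from rfl,
    hfun] at h3
  refine h3.congr_fderiv ?_
  symm
  rw [Real.sqrt_sq h0.le]
  ext y
  simp only [ContinuousLinearMap.coe_smul', Pi.smul_apply, smul_eq_mul, nsmul_eq_mul,
    Nat.cast_ofNat, Pi.mul_apply, Pi.ofNat_apply]
  field_simp

lemma fb_eventually_zero {b : ℝ} (hb : 0 < b) {x : E3} (hx : ‖x‖ < Real.exp (-b⁻¹)) :
    fb b =ᶠ[nhds x] fun _ => (0 : ℝ) := by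
  have hopen : IsOpen {y : E3 | ‖y‖ < Real.exp (-b⁻¹)} := by
    have : {y : E3 | ‖y‖ < Real.exp (-b⁻¹)} = Metric.ball 0 (Real.exp (-b⁻¹)) := by
      ext y; simp [Metric.mem_ball, dist_zero_right]
    rw [this]; exact Metric.isOpen_ball
  filter_upwards [hopen.mem_nhds hx] with y hy
  exact phi_zero_small hb (norm_nonneg y) hy

lemma fb_hasFDerivAt {b : ℝ} (hb : 0 < b) (x : E3) :
    HasFDerivAt (fb b) (phid b ‖x‖ • (‖x‖⁻¹ • innerSL ℝ x)) x := by
  by_cases hx : x = 0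
  · subst hx
    have h0 : phid b ‖(0 : E3)‖ = 0 := by
      rw [norm_zero]; exact phid_zero_small hb le_rfl (Real.exp_pos _)
    rw [h0, zero_smul]
    exact (hasFDerivAt_const (0 : ℝ) (0 : E3)).congr_of_eventuallyEq
      (fb_eventually_zero hb (by rw [norm_zero]; exact Real.exp_pos _))
  · have h0 : (0 : ℝ) < ‖x‖ := norm_pos_iff.mpr hx
    exact (hasDerivAt_phi b h0).comp_hasFDerivAt x (hasFDerivAt_norm3 hx)

lemma fb_differentiable {b : ℝ} (hb : 0 < b) : Differentiable ℝ (fb b) :=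
  fun x => (fb_hasFDerivAt hb x).differentiableAt

lemma norm_fderiv_fb {b : ℝ} (hb : 0 < b) (x : E3) :
    ‖fderiv ℝ (fb b) x‖ = |phid b ‖x‖| := by
  rw [(fb_hasFDerivAt hb x).fderiv]
  by_cases hx : x = 0
  · subst hx
    have h0 : phid b ‖(0 : E3)‖ = 0 := by
      rw [norm_zero]; exact phid_zero_small hb le_rfl (Real.exp_pos _)
    have h0' : phid b 0 = 0 := by simpa using h0
    simp [h0']
  · have h0 : (0 : ℝ) < ‖x‖ := norm_pos_iff.mpr hx
    rw [norm_smul, norm_smul, innerSL_apply_norm, norm_inv, norm_norm, Real.norm_eq_abs]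
    field_simp

lemma fb_compactSupport {b : ℝ} (hb : 0 < b) : HasCompactSupport (fb b) := by
  apply HasCompactSupport.intro (isCompact_closedBall (0 : E3) (Real.exp b⁻¹))
  intro x hx
  rw [Metric.mem_closedBall, dist_zero_right, not_le] at hx
  exact phi_zero_large hb hx

lemma grad_compactSupport {b : ℝ} (hb : 0 < b) :
    HasCompactSupport (fun x : E3 => ‖fderiv ℝ (fb b) x‖) := by
  apply HasCompactSupport.intro (isCompact_closedBall (0 : E3) (Real.exp b⁻¹))
  intro x hx
  rw [Metric.mem_closedBall, dist_zero_right, not_le] at hx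
  rw [norm_fderiv_fb hb, phid_zero_large hb hx, abs_zero]

lemma grad_continuous {b : ℝ} (hb : 0 < b) :
    Continuous (fun x : E3 => ‖fderiv ℝ (fb b) x‖) := by
  have heq : (fun x : E3 => ‖fderiv ℝ (fb b) x‖) = fun x : E3 => |phid b ‖x‖| :=
    funext (norm_fderiv_fb hb)
  rw [heq, continuous_iff_continuousAt]
  intro x
  rcases lt_or_ge ‖x‖ (Real.exp (-b⁻¹)) with hx | hx
  · have hopen : IsOpen {y : E3 | ‖y‖ < Real.exp (-b⁻¹)} := by
      have : {y : E3 | ‖y‖ < Real.exp (-b⁻¹)} = Metric.ball 0 (Real.exp (-b⁻¹)) := by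
        ext y; simp [Metric.mem_ball, dist_zero_right]
      rw [this]; exact Metric.isOpen_ball
    have he : (fun y : E3 => |phid b ‖y‖|) =ᶠ[nhds x] fun _ => (0 : ℝ) := by
      filter_upwards [hopen.mem_nhds hx] with y hy
      rw [phid_zero_small hb (norm_nonneg y) hy, abs_zero]
    exact he.continuousAt
  · have h0 : (0 : ℝ) < ‖x‖ := lt_of_lt_of_le (Real.exp_pos _) hx
    exact continuous_abs.continuousAt.comp
      ((continuousAt_phid h0).comp continuous_norm.continuousAt)

end HardyAux

namespace HardyAux

lemma hasDerivAt_P (a1 a2 a3 a4 a5 a6 a7 a8 a9 t : ℝ) :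
    HasDerivAt (fun t : ℝ => a1 * t + a2 * t ^ 2 + a3 * t ^ 3 + a4 * t ^ 4 + a5 * t ^ 5
        + a6 * t ^ 6 + a7 * t ^ 7 + a8 * t ^ 8 + a9 * t ^ 9)
      (a1 + 2 * a2 * t + 3 * a3 * t ^ 2 + 4 * a4 * t ^ 3 + 5 * a5 * t ^ 4 + 6 * a6 * t ^ 5
        + 7 * a7 * t ^ 6 + 8 * a8 * t ^ 7 + 9 * a9 * t ^ 8) t := by
  have h : HasDerivAt (fun t : ℝ => a1 * t + a2 * t ^ 2 + a3 * t ^ 3 + a4 * t ^ 4 + a5 * t ^ 5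
        + a6 * t ^ 6 + a7 * t ^ 7 + a8 * t ^ 8 + a9 * t ^ 9)
      (a1 * 1 + a2 * (2 * t ^ 1) + a3 * (3 * t ^ 2) + a4 * (4 * t ^ 3) + a5 * (5 * t ^ 4)
        + a6 * (6 * t ^ 5) + a7 * (7 * t ^ 6) + a8 * (8 * t ^ 7) + a9 * (9 * t ^ 8)) t := by
    exact ((((((((((hasDerivAt_id t).congr_deriv (by ring : (1:ℝ) = 1)).const_mul a1).add
      ((hasDerivAt_pow 2 t).const_mul a2)).add
      ((hasDerivAt_pow 3 t).const_mul a3)).add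
      ((hasDerivAt_pow 4 t).const_mul a4)).add
      ((hasDerivAt_pow 5 t).const_mul a5)).add
      ((hasDerivAt_pow 6 t).const_mul a6)).add
      ((hasDerivAt_pow 7 t).const_mul a7)).add
      ((hasDerivAt_pow 8 t).const_mul a8)).add
      ((hasDerivAt_pow 9 t).const_mul a9)
  convert h using 1
  ring

/-- Key reduction: integral over `Ioi 0` of a log-radial profile. -/
lemma key_integral {b : ℝ} (hb : 0 < b) (W : ℝ → ℝ) (hW : Continuous W)
    (hW0 : ∀ t, 1 ≤ |t| → W t = 0) (F : ℝ → ℝ)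
    (hF : ∀ r : ℝ, 0 < r → F r = r⁻¹ * W (b * Real.log r)) :
    ∫ r in Ioi (0 : ℝ), F r = b⁻¹ * ∫ t in (-1 : ℝ)..1, W t := by
  set r₁ := Real.exp (-b⁻¹) with hr₁def
  set r₂ := Real.exp b⁻¹ with hr₂def
  have hr₁ : 0 < r₁ := Real.exp_pos _
  have hr₁₂ : r₁ ≤ r₂ := Real.exp_le_exp.mpr (by simp; positivity)
  have hsub : Ioc r₁ r₂ ⊆ Ioi (0 : ℝ) := fun r hr => lt_trans hr₁ hr.1
  have step1 : ∫ r in Ioi (0 : ℝ), F r = ∫ r in Ioc r₁ r₂, F r := by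
    apply setIntegral_eq_of_subset_of_forall_diff_eq_zero measurableSet_Ioi hsub
    intro r hr
    obtain ⟨hr0, hr'⟩ := hr
    rw [mem_Ioi] at hr0
    rw [hF r hr0]
    have hWz : W (b * Real.log r) = 0 := by
      rw [mem_Ioc, not_and_or] at hr'
      rcases hr' with h | h
      · push_neg at h
        rcases lt_or_eq_of_le h with h' | h'
        · exact hW0 _ (le_abs.mpr (Or.inr (by linarith [log_lt_neg hb hr0 h'])))
        · have : b * Real.log r = -1 := by
            rw [h', hr₁def, Real.log_exp]; field_simp
          exact hW0 _ (by rw [this]; simp)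
      · push_neg at h
        exact hW0 _ (le_abs.mpr (Or.inl (log_gt_pos hb h)))
    rw [hWz, mul_zero]
  have step2 : ∫ r in Ioc r₁ r₂, F r = ∫ r in r₁..r₂, r⁻¹ * W (b * Real.log r) := by
    rw [intervalIntegral.integral_of_le hr₁₂]
    apply setIntegral_congr_fun measurableSet_Ioc
    intro r hr
    exact hF r (lt_trans hr₁ hr.1)
  have huIcc : uIcc r₁ r₂ = Icc r₁ r₂ := uIcc_of_le hr₁₂
  have step3 : ∫ r in r₁..r₂, r⁻¹ * W (b * Real.log r)
      = ∫ u in Real.log r₁..Real.log r₂, W (b * u) := by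
    have h := intervalIntegral.integral_comp_smul_deriv (a := r₁) (b := r₂)
      (f := Real.log) (f' := fun r => r⁻¹) (g := fun u => W (b * u))
      (fun r hr => by
        rw [huIcc] at hr
        exact Real.hasDerivAt_log (lt_of_lt_of_le hr₁ hr.1).ne')
      (by
        apply ContinuousOn.mono continuousOn_inv₀
        rw [huIcc]
        intro r hr
        exact (lt_of_lt_of_le hr₁ hr.1).ne')
      (hW.comp (continuous_const.mul continuous_id))
    simpa [smul_eq_mul, Function.comp] using h
  have step4 : ∫ u in Real.log r₁..Real.log r₂, W (b * u)
      = b⁻¹ * ∫ t in (-1 : ℝ)..1, W t := by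
    rw [intervalIntegral.integral_comp_mul_left W hb.ne']
    rw [hr₁def, hr₂def, Real.log_exp, Real.log_exp]
    rw [show b * -b⁻¹ = -1 by field_simp, show b * b⁻¹ = 1 by field_simp, smul_eq_mul]
  rw [step1, step2, step3, step4]

lemma integral_H_sq : ∫ t in (-1 : ℝ)..1, H t ^ 2 = 256 / 315 := by
  have hcongr : ∫ t in (-1 : ℝ)..1, H t ^ 2 = ∫ t in (-1 : ℝ)..1, (1 - t ^ 2) ^ 4 := by
    apply intervalIntegral.integral_congr
    intro t ht
    rw [uIcc_of_le (by norm_num : (-1 : ℝ) ≤ 1)] at ht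
    show H t ^ 2 = (1 - t ^ 2) ^ 4
    rw [H_eq (abs_le.mpr ⟨ht.1, ht.2⟩)]
    ring
  rw [hcongr]
  have hderiv : ∀ t ∈ uIcc (-1 : ℝ) 1,
      HasDerivAt (fun t : ℝ => 1 * t + 0 * t ^ 2 + (-4/3) * t ^ 3 + 0 * t ^ 4 + (6/5) * t ^ 5
        + 0 * t ^ 6 + (-4/7) * t ^ 7 + 0 * t ^ 8 + (1/9) * t ^ 9) ((1 - t ^ 2) ^ 4) t := by
    intro t _
    have h := hasDerivAt_P 1 0 (-4/3) 0 (6/5) 0 (-4/7) 0 (1/9) t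
    convert h using 1
    ring
  rw [intervalIntegral.integral_eq_sub_of_hasDerivAt hderiv
    (((continuous_const.sub (continuous_pow 2)).pow 4).intervalIntegrable _ _)]
  norm_num

lemma integral_grad_poly (b : ℝ) :
    ∫ t in (-1 : ℝ)..1, ((-(1/2)) * H t + b * Hd t) ^ 2
      = 64 / 315 + 256 / 105 * b ^ 2 := by
  have hcongr : ∫ t in (-1 : ℝ)..1, ((-(1/2)) * H t + b * Hd t) ^ 2
      = ∫ t in (-1 : ℝ)..1,
        ((-(1/2)) * (1 - t ^ 2) ^ 2 + b * (2 * (1 - t ^ 2) * (-(2 * t)))) ^ 2 := by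
    apply intervalIntegral.integral_congr
    intro t ht
    rw [uIcc_of_le (by norm_num : (-1 : ℝ) ≤ 1)] at ht
    show ((-(1/2)) * H t + b * Hd t) ^ 2 = _
    rw [H_eq (abs_le.mpr ⟨ht.1, ht.2⟩), Hd_eq (abs_le.mpr ⟨ht.1, ht.2⟩)]
  rw [hcongr]
  have hderiv : ∀ t ∈ uIcc (-1 : ℝ) 1,
      HasDerivAt (fun t : ℝ => (1/4) * t + (2 * b) * t ^ 2 + (-1/3 + 16/3 * b ^ 2) * t ^ 3
        + (-3 * b) * t ^ 4 + (3/10 - 32/5 * b ^ 2) * t ^ 5 + (2 * b) * t ^ 6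
        + (-1/7 + 16/7 * b ^ 2) * t ^ 7 + (-b/2) * t ^ 8 + (1/36) * t ^ 9)
      (((-(1/2)) * (1 - t ^ 2) ^ 2 + b * (2 * (1 - t ^ 2) * (-(2 * t)))) ^ 2) t := by
    intro t _
    have h := hasDerivAt_P (1/4) (2 * b) (-1/3 + 16/3 * b ^ 2) (-3 * b) (3/10 - 32/5 * b ^ 2)
      (2 * b) (-1/7 + 16/7 * b ^ 2) (-b/2) (1/36) t
    convert h using 1
    ring
  have hcont : Continuous fun t : ℝ =>
      ((-(1/2)) * (1 - t ^ 2) ^ 2 + b * (2 * (1 - t ^ 2) * (-(2 * t)))) ^ 2 := by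
    fun_prop
  rw [intervalIntegral.integral_eq_sub_of_hasDerivAt hderiv (hcont.intervalIntegrable _ _)]
  ring

end HardyAux

namespace HardyAux

lemma integral_Ioi_fsq {b : ℝ} (hb : 0 < b) :
    ∫ r in Ioi (0 : ℝ), r ^ (2 : ℕ) • (phi b r ^ 2 / r ^ 2) = b⁻¹ * (256 / 315) := by
  have h := key_integral hb (fun t => H t ^ 2) (continuous_H.pow 2)
    (fun t ht => by show H t ^ 2 = 0; rw [H_zero ht]; ring)
    (fun r => r ^ (2 : ℕ) • (phi b r ^ 2 / r ^ 2))
    (fun r hr => by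
      have hBq : (r ^ (-(1/2) : ℝ)) ^ (2 : ℕ) = r⁻¹ := by
        rw [← Real.rpow_natCast (r ^ (-(1/2) : ℝ)) 2, ← Real.rpow_mul hr.le]
        norm_num [Real.rpow_neg_one]
      show r ^ (2 : ℕ) • (phi b r ^ 2 / r ^ 2) = r⁻¹ * H (b * Real.log r) ^ 2
      rw [smul_eq_mul, phi, mul_pow, hBq]
      field_simp)
  rw [h, integral_H_sq]

lemma phid_factor {b r : ℝ} (hr : 0 < r) :
    phid b r = r ^ (-(1/2) : ℝ) * r⁻¹
      * ((-(1/2)) * H (b * Real.log r) + b * Hd (b * Real.log r)) := by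
  have hA : r ^ (-(3/2) : ℝ) = r ^ (-(1/2) : ℝ) * r⁻¹ := by
    rw [show (-(3/2) : ℝ) = -(1/2) + (-1) by norm_num, Real.rpow_add hr, Real.rpow_neg_one]
  rw [phid, hA]
  field_simp

lemma integral_Ioi_grad {b : ℝ} (hb : 0 < b) :
    ∫ r in Ioi (0 : ℝ), r ^ (2 : ℕ) • (|phid b r| ^ 2)
      = b⁻¹ * (64 / 315 + 256 / 105 * b ^ 2) := by
  have h := key_integral hb (fun t => ((-(1/2)) * H t + b * Hd t) ^ 2)
    (((continuous_const.mul continuous_H).add (continuous_const.mul continuous_Hd)).pow 2)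
    (fun t ht => by
      show ((-(1/2)) * H t + b * Hd t) ^ 2 = 0
      rw [H_zero ht, Hd_zero ht]; ring)
    (fun r => r ^ (2 : ℕ) • (|phid b r| ^ 2))
    (fun r hr => by
      have hBq : (r ^ (-(1/2) : ℝ)) ^ (2 : ℕ) = r⁻¹ := by
        rw [← Real.rpow_natCast (r ^ (-(1/2) : ℝ)) 2, ← Real.rpow_mul hr.le]
        norm_num [Real.rpow_neg_one]
      show r ^ (2 : ℕ) • (|phid b r| ^ 2)
        = r⁻¹ * ((-(1/2)) * H (b * Real.log r) + b * Hd (b * Real.log r)) ^ 2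
      rw [smul_eq_mul, sq_abs, phid_factor hr, mul_pow, mul_pow, hBq]
      field_simp)
  rw [h, integral_grad_poly]

lemma integral_fb_sq {b : ℝ} (hb : 0 < b) :
    ∫ x : E3, fb b x ^ 2 / ‖x‖ ^ 2
      = 3 * ((volume (Metric.ball (0 : E3) 1)).toReal * (b⁻¹ * (256 / 315))) := by
  simp only [fb]
  have h := MeasureTheory.integral_fun_norm_addHaar (volume : Measure E3)
    (fun r => phi b r ^ 2 / r ^ 2)
  simp only [finrank_euclideanSpace_fin] at h
  rw [show (3 : ℕ) - 1 = 2 from rfl] at h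
  rw [h, integral_Ioi_fsq hb, nsmul_eq_mul, smul_eq_mul]
  push_cast
  rw [measureReal_def]

lemma integral_grad_fb {b : ℝ} (hb : 0 < b) :
    ∫ x : E3, ‖fderiv ℝ (fb b) x‖ ^ 2
      = 3 * ((volume (Metric.ball (0 : E3) 1)).toReal
          * (b⁻¹ * (64 / 315 + 256 / 105 * b ^ 2))) := by
  simp only [norm_fderiv_fb hb]
  have h := MeasureTheory.integral_fun_norm_addHaar (volume : Measure E3)
    (fun r => |phid b r| ^ 2)
  simp only [finrank_euclideanSpace_fin] at h
  rw [show (3 : ℕ) - 1 = 2 from rfl] at h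
  rw [h, integral_Ioi_grad hb, nsmul_eq_mul, smul_eq_mul]
  push_cast
  rw [measureReal_def]

end HardyAux

open HardyAux

/-- Optimality of the constant 4 in the three-dimensional Hardy inequality:
for every `ε > 0` there is a compactly supported, not identically zero
`f ∈ W^{1,2}(ℝ³)` with `∫ f²/|x|² dx > (4 - ε) ∫ |∇f|² dx`. -/
theorem hardy_constant_optimal_dim3 (ε : ℝ) (hε : 0 < ε) :
    ∃ f : EuclideanSpace ℝ (Fin 3) → ℝ,
      Differentiable ℝ f ∧ HasCompactSupport f ∧ f ≠ 0 ∧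
      MemLp f 2 (volume : Measure (EuclideanSpace ℝ (Fin 3))) ∧
      MemLp (fun x => ‖fderiv ℝ f x‖) 2
        (volume : Measure (EuclideanSpace ℝ (Fin 3))) ∧
      (4 - ε) * ∫ x, ‖fderiv ℝ f x‖ ^ 2 < ∫ x, f x ^ 2 / ‖x‖ ^ 2 := by
  set m := min ε 1 with hmdef
  have hm : 0 < m := lt_min hε one_pos
  have hm1 : m ≤ 1 := min_le_right _ _
  have hmε : m ≤ ε := min_le_left _ _
  set b := Real.sqrt m / 7 with hbdef
  have hb : 0 < b := by
    have := Real.sqrt_pos.mpr hm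
    positivity
  have hb2 : b ^ 2 = m / 49 := by
    rw [hbdef, div_pow, Real.sq_sqrt hm.le]
    norm_num
  refine ⟨fb b, fb_differentiable hb, fb_compactSupport hb, ?_, ?_, ?_, ?_⟩
  · intro hcontra
    have h1 := congrFun hcontra (EuclideanSpace.single (0 : Fin 3) (1 : ℝ))
    rw [Pi.zero_apply] at h1
    rw [fb, EuclideanSpace.norm_single, norm_one, phi_one] at h1
    exact one_ne_zero h1
  · exact (fb_differentiable hb).continuous.memLp_of_hasCompactSupport (fb_compactSupport hb)
  · exact (grad_continuous hb).memLp_of_hasCompactSupport (grad_compactSupport hb)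
  · rw [integral_fb_sq hb, integral_grad_fb hb]
    set c := (volume (Metric.ball (0 : E3) 1)).toReal with hcdef
    have hc : 0 < c := by
      rw [hcdef]
      exact ENNReal.toReal_pos (Metric.measure_ball_pos volume 0 one_pos).ne'
        measure_ball_lt_top.ne
    have key : (4 - ε) * (64 / 315 + 256 / 105 * b ^ 2) < 256 / 315 := by
      rw [hb2]
      nlinarith [mul_pos hε hm, hm, hm1, hmε, hε]
    have hpos : 0 < 3 * (c * b⁻¹) := by positivity
    have h2 := mul_lt_mul_of_pos_left key hpos
    have e1 : (4 - ε) * (3 * (c * (b⁻¹ * (64 / 315 + 256 / 105 * b ^ 2))))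
        = 3 * (c * b⁻¹) * ((4 - ε) * (64 / 315 + 256 / 105 * b ^ 2)) := by ring
    have e2 : 3 * (c * (b⁻¹ * (256 / 315))) = 3 * (c * b⁻¹) * (256 / 315) := by ring
    rw [e1, e2]
    exact h2
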